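/- Let A be a GF(q)-subspace of GF(q^m) of dimension α ≥ 1 and let B' be a GF(q)-subspace of GF(q^m) such that the product space ⟨AB'⟩ has dimension D. Then the number of elements b ∈ GF(q^m) such that the subspace Ab = {ab : a ∈ A} has a nonzero intersection with ⟨AB'⟩ is at most ((q^α - 1)/(q - 1)) · q^D. -/

import Mathlib

/-- Let `A` be a `GF(q)`-subspace of `GF(q^m)` of dimension `α ≥ 1` and `B'` a
`GF(q)`-subspace such that the product space `⟨AB'⟩` has dimension `D`. Then the number of
elements `b ∈ GF(q^m)` such that the subspace `Ab = {ab : a ∈ A}` has a nonzero intersection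
with `⟨AB'⟩` is at most `((q^α - 1)/(q - 1)) · q^D`. -/
theorem count_bad_multipliers
    (q m α D : ℕ) (hm : 0 < m)
    (Fq K : Type) [Field Fq] [Fintype Fq] [Field K] [Algebra Fq K]
    (hq : Fintype.card Fq = q) (hK : Module.finrank Fq K = m)
    (A B' : Submodule Fq K)
    (hA : Module.finrank Fq ↥A = α) (hα : 1 ≤ α)
    (hD : Module.finrank Fq ↥(A * B') = D) :
    (Nat.card {b : K // A.map (LinearMap.mulLeft Fq b) ⊓ (A * B') ≠ ⊥} : ℚ) ≤
      (((q : ℚ) ^ α - 1) / ((q : ℚ) - 1)) * (q : ℚ) ^ D := by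
  classical
  have hq2 : 2 ≤ q := hq ▸ Fintype.one_lt_card
  have hfd : FiniteDimensional Fq K := FiniteDimensional.of_finrank_pos (hK ▸ hm)
  have hfin : Finite K := Module.finite_of_finite Fq
  let instK : Fintype K := Fintype.ofFinite K
  set S := A * B' with hSdef
  -- cardinalities of the subspaces
  have hcardA : Fintype.card ↥A = q ^ α := by
    rw [Module.card_eq_pow_finrank (K := Fq) (V := ↥A), hq, hA]
  have hcardS : Fintype.card ↥S = q ^ D := by
    rw [Module.card_eq_pow_finrank (K := Fq) (V := ↥S), hq, hD]
  -- the finsets we count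
  let P : Finset (K × K) :=
    Finset.univ.filter fun p => p.1 ∈ A ∧ p.1 ≠ 0 ∧ p.1 * p.2 ∈ S
  let T : Finset K :=
    Finset.univ.filter fun b => A.map (LinearMap.mulLeft Fq b) ⊓ S ≠ ⊥
  have hT : (Nat.card {b : K // A.map (LinearMap.mulLeft Fq b) ⊓ S ≠ ⊥}) = T.card := by
    rw [Nat.card_eq_fintype_card, Fintype.card_subtype]
  -- upper bound on P.card
  let Afin : Finset K := ((A : Set K).toFinset).erase 0
  have hAfincard : Afin.card = q ^ α - 1 := by
    have h0 : (0 : K) ∈ (A : Set K).toFinset := by simp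
    rw [Finset.card_erase_of_mem h0, Set.toFinset_card]
    rw [show Fintype.card ↥(A : Set K) = Fintype.card ↥A from rfl, hcardA]
  have hup : P.card ≤ (q ^ α - 1) * q ^ D := by
    rw [Finset.card_eq_sum_card_fiberwise
      (f := Prod.fst) (t := Afin) (fun p hp => by
        simp only [P, Finset.mem_coe, Finset.mem_filter] at hp
        simp [Afin, hp.2.1, hp.2.2.1])]
    calc ∑ a ∈ Afin, (P.filter fun p => p.1 = a).card
        ≤ ∑ a ∈ Afin, q ^ D := by
          refine Finset.sum_le_sum fun a ha => ?_
          have ha0 : a ≠ 0 := by simp [Afin] at ha; exact ha.1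
          have hSfin : ((S : Set K).toFinset).card = q ^ D := by
            rw [Set.toFinset_card]; exact hcardS
          rw [← hSfin]
          refine Finset.card_le_card_of_injOn (fun p => p.1 * p.2) ?_ ?_
          · intro p hp
            simp only [P, Finset.mem_coe, Finset.mem_filter] at hp
            simp [hp.1.2.2.2]
          · intro p hp p' hp' hpp'
            simp only [P, Finset.mem_coe, Finset.mem_filter] at hp hp'
            have h1 : p.1 = a := hp.2
            have h1' : p'.1 = a := hp'.2
            have : p.2 = p'.2 := mul_left_cancel₀ ha0 (by simpa [h1, h1'] using hpp')
            exact Prod.ext (h1.trans h1'.symm) this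
      _ = (q ^ α - 1) * q ^ D := by rw [Finset.sum_const, hAfincard, smul_eq_mul]
  -- lower bound on P.card
  have hlow : T.card * (q - 1) ≤ P.card := by
    rw [Finset.card_eq_sum_card_fiberwise
      (f := Prod.snd) (t := Finset.univ) (fun p _ => Finset.mem_univ _)]
    calc T.card * (q - 1) = ∑ _b ∈ T, (q - 1) := by rw [Finset.sum_const, smul_eq_mul]
      _ ≤ ∑ b ∈ T, (P.filter fun p => p.2 = b).card := by
          refine Finset.sum_le_sum fun b hb => ?_
          -- there is a nonzero a ∈ A with a * b ∈ S
          simp only [T, Finset.mem_filter] at hb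
          obtain ⟨x, hx, hx0⟩ := Submodule.ne_bot_iff _ |>.1 hb.2
          obtain ⟨hxm, hxS⟩ := Submodule.mem_inf.1 hx
          obtain ⟨a0, ha0A, ha0⟩ := Submodule.mem_map.1 hxm
          have ha0x : b * a0 = x := ha0
          have ha00 : a0 ≠ 0 := by
            rintro rfl; rw [mul_zero] at ha0x; exact hx0 ha0x.symm
          -- inject nonzero scalars
          have : (Finset.univ.erase (0 : Fq)).card = q - 1 := by
            rw [Finset.card_erase_of_mem (Finset.mem_univ _), Finset.card_univ, hq]
          rw [← this]
          refine Finset.card_le_card_of_injOn (fun c => (c • a0, b)) ?_ ?_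
          · intro c hc
            have hc0 : c ≠ 0 := by simpa using (Finset.mem_erase.1 hc).1
            simp only [Finset.mem_coe, Finset.mem_filter, P, Finset.mem_univ, true_and]
            refine ⟨⟨A.smul_mem c ha0A, smul_ne_zero hc0 ha00, ?_⟩, trivial⟩
            have : (c • a0) * b = c • (a0 * b) := by
              rw [Algebra.smul_def, Algebra.smul_def, mul_assoc]
            rw [this]
            have : a0 * b ∈ S := by rw [mul_comm, ha0x]; exact hxS
            exact S.smul_mem c this
          · intro c _ c' _ hcc'
            have : c • a0 = c' • a0 := congrArg Prod.fst hcc'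
            exact smul_left_injective Fq ha00 this
      _ ≤ ∑ b ∈ Finset.univ, (P.filter fun p => p.2 = b).card :=
          Finset.sum_le_sum_of_subset (Finset.subset_univ T)
  -- combine
  have hnat : T.card * (q - 1) ≤ (q ^ α - 1) * q ^ D := hlow.trans hup
  have hq1 : (1 : ℚ) < (q : ℚ) := by exact_mod_cast hq2
  rw [hT, div_mul_eq_mul_div, le_div_iff₀ (by linarith)]
  have h1q : 1 ≤ q := by omega
  have h1qa : 1 ≤ q ^ α := Nat.one_le_pow _ _ (by omega)
  have := (Nat.cast_le (α := ℚ)).2 hnat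
  push_cast [Nat.cast_sub h1q, Nat.cast_sub h1qa] at this
  convert this using 1 <;> push_cast <;> ring
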